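/- Let α < 0. Define A⁺ = β⁺(α)·α/γ(α) and A⁻ = β⁻(α)·α/γ(α), and set Φ(α) = α + π⁺·[(α·μc2⁺ − μc⁺)·(A⁺)² + 2·α·μc⁺·A⁺] + π⁻·[(α·μc2⁻ − μc⁻)·(A⁻)² + 2·α·μc⁻·A⁻] + 2·α·π₁₁·μc⁺·μc⁻·A⁺·A⁻. Then α < Φ(α) < 0; that is, one backward step of the inventory-cost recursion maps any negative value strictly closer to zero while keeping it negative. -/

import Mathlib

lemma hQaux (p q r : ℝ) (hp0 : 0 < p) (hp1 : p < 1) (hq0 : 0 < q) (hq1 : q < 1)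
    (hr0 : 0 ≤ r) (hrl : p + q - 1 ≤ r) (hrp : r ≤ p) (hrq : r ≤ q) :
    0 ≤ p*q*(1 - p - q + 2*r) - r^2 := by
  nlinarith [mul_nonneg (sub_nonneg.2 hrp) (sub_nonneg.2 hrq),
    mul_nonneg hr0 (by linarith : (0:ℝ) ≤ r + 1 - p - q),
    mul_nonneg (by linarith : (0:ℝ) ≤ 1 - p) (by linarith : (0:ℝ) ≤ 1 - q),
    mul_pos hp0 hq0, sq_nonneg (p - q), sq_nonneg (p + q - 2*r),
    mul_nonneg (mul_nonneg hr0 (sub_nonneg.2 hrp)) (sub_nonneg.2 hrq),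
    mul_nonneg (mul_nonneg hr0 hr0) (by linarith : (0:ℝ) ≤ r + 1 - p - q)]

set_option maxHeartbeats 1000000 in
theorem stmt0
    (πp πm π11 μcp μcm μc2p μc2m α : ℝ)
    (hπp : πp ∈ Set.Ioo (0:ℝ) 1) (hπm : πm ∈ Set.Ioo (0:ℝ) 1)
    (hπ11l : max (πp + πm - 1) 0 ≤ π11) (hπ11u : π11 ≤ min πp πm)
    (hμcp : 0 < μcp) (hμcm : 0 < μcm)
    (hμc2p : μcp ^ 2 ≤ μc2p) (hμc2m : μcm ^ 2 ≤ μc2m)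
    (hα : α < 0)
    (γ βp βm Ap Am Φ : ℝ)
    (hγ : γ = (π11 * α * μcp * μcm) ^ 2
            - πp * πm * (α * μc2p - μcp) * (α * μc2m - μcm))
    (hβp : βp = πp * πm * μcp * (α * μc2m - μcm) - πm * π11 * α * μcp * μcm ^ 2)
    (hβm : βm = πp * πm * μcm * (α * μc2p - μcp) - πp * π11 * α * μcm * μcp ^ 2)
    (hAp : Ap = βp * α / γ) (hAm : Am = βm * α / γ)
    (hΦ : Φ = α + πp * ((α * μc2p - μcp) * Ap ^ 2 + 2 * α * μcp * Ap)
            + πm * ((α * μc2m - μcm) * Am ^ 2 + 2 * α * μcm * Am)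
            + 2 * α * π11 * μcp * μcm * Ap * Am) :
    α < Φ ∧ Φ < 0 := by
  obtain ⟨hp0, hp1⟩ := hπp
  obtain ⟨hm0, hm1⟩ := hπm
  have hr0 : 0 ≤ π11 := le_trans (le_max_right _ _) hπ11l
  have hrl : πp + πm - 1 ≤ π11 := le_trans (le_max_left _ _) hπ11l
  have hrp : π11 ≤ πp := le_trans hπ11u (min_le_left _ _)
  have hrm : π11 ≤ πm := le_trans hπ11u (min_le_right _ _)
  have hna : 0 < -α := neg_pos.mpr hα
  -- lower bounds on cp := μcp - α*μc2p and cm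
  have hcp1 : μcp * (1 - α * μcp) ≤ μcp - α * μc2p := by
    nlinarith [mul_nonneg hna.le (sub_nonneg.2 hμc2p)]
  have hcm1 : μcm * (1 - α * μcm) ≤ μcm - α * μc2m := by
    nlinarith [mul_nonneg hna.le (sub_nonneg.2 hμc2m)]
  have hap0 : 0 < μcp * (1 - α * μcp) := by
    apply mul_pos hμcp; nlinarith [mul_pos hna hμcp]
  have hbm0 : 0 < μcm * (1 - α * μcm) := by
    apply mul_pos hμcm; nlinarith [mul_pos hna hμcm]
  have hcp0 : 0 < μcp - α * μc2p := lt_of_lt_of_le hap0 hcp1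
  have hcm0 : 0 < μcm - α * μc2m := lt_of_lt_of_le hbm0 hcm1
  -- γ < 0
  have hr2 : π11 * π11 ≤ πp * πm := mul_le_mul hrp hrm hr0 hp0.le
  have hcc : α^2 * μcp^2 * μcm^2 < (μcp - α * μc2p) * (μcm - α * μc2m) := by
    have e1 : α^2 * μcp^2 * μcm^2 < μcp * (1 - α * μcp) * (μcm * (1 - α * μcm)) := by
      nlinarith [mul_pos hμcp hμcm,
        mul_pos (mul_pos hμcp hμcm) (mul_pos hna (add_pos hμcp hμcm))]
    exact lt_of_lt_of_le e1 (mul_le_mul hcp1 hcm1 hbm0.le hcp0.le)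
  have hγneg : γ < 0 := by
    rw [hγ]
    have h5 := mul_le_mul_of_nonneg_right hr2 (show (0:ℝ) ≤ α^2 * μcp^2 * μcm^2 by positivity)
    have h6 := mul_lt_mul_of_pos_left hcc (mul_pos hp0 hm0)
    nlinarith [h5, h6]
  have hγne : γ ≠ 0 := hγneg.ne
  -- key rational identity
  have key : Φ = α + α^2 * (πp * μcp * βp + πm * μcm * βm) / γ := by
    subst hβp hβm hΦ hAp hAm
    field_simp
    rw [hγ]
    ring
  -- K < 0
  have hS : 0 < πp * μcp^2 * (μcm - α * μc2m) + πm * μcm^2 * (μcp - α * μc2p)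
      + 2 * α * π11 * μcp^2 * μcm^2 := by
    linarith [mul_le_mul_of_nonneg_left hcm1 (by positivity : (0:ℝ) ≤ πp * μcp^2),
      mul_le_mul_of_nonneg_left hcp1 (by positivity : (0:ℝ) ≤ πm * μcm^2),
      mul_nonneg (mul_nonneg hna.le (sub_nonneg.2 hrp)) (by positivity : (0:ℝ) ≤ μcp^2 * μcm^2),
      mul_nonneg (mul_nonneg hna.le (sub_nonneg.2 hrm)) (by positivity : (0:ℝ) ≤ μcp^2 * μcm^2),
      mul_pos (mul_pos hp0 (mul_pos hμcp hμcp)) hμcm,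
      mul_pos (mul_pos hm0 (mul_pos hμcm hμcm)) hμcp]
  have hK : πp * μcp * βp + πm * μcm * βm < 0 := by
    rw [hβp, hβm]
    nlinarith [mul_pos (mul_pos hp0 hm0) hS, hS]
  -- γ + α K < 0
  have hf1 : 0 < (μcp - α * μc2p) + α * πp * μcp^2 := by
    nlinarith [mul_nonneg (mul_nonneg hna.le (by linarith : (0:ℝ) ≤ 1 - πp)) (by positivity : (0:ℝ) ≤ μcp^2)]
  have hf2 : 0 < μcm * (1 - α * μcm) + α * πm * μcm^2 := by
    nlinarith [mul_nonneg (mul_nonneg hna.le (by linarith : (0:ℝ) ≤ 1 - πm)) (by positivity : (0:ℝ) ≤ μcm^2)]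
  have hQ : 0 ≤ πp*πm*(1 - πp - πm + 2*π11) - π11^2 :=
    hQaux πp πm π11 hp0 hp1 hm0 hm1 hr0 hrl hrp hrm
  have hT1 : 0 ≤ πp*πm * ((μcm - α * μc2m) - μcm * (1 - α * μcm)) * ((μcp - α * μc2p) + α * πp * μcp^2) :=
    mul_nonneg (mul_nonneg (mul_pos hp0 hm0).le (by linarith)) hf1.le
  have hT2 : 0 ≤ πp*πm * ((μcp - α * μc2p) - μcp * (1 - α * μcp)) * (μcm * (1 - α * μcm) + α * πm * μcm^2) :=
    mul_nonneg (mul_nonneg (mul_pos hp0 hm0).le (by linarith)) hf2.le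
  have hT3 : 0 ≤ (μcp * μcm) * ((-α) * (πp*πm*μcp*(1-πp))) :=
    mul_nonneg (mul_pos hμcp hμcm).le (mul_nonneg hna.le
      (mul_nonneg (mul_nonneg (mul_pos hp0 hm0).le hμcp.le) (by linarith)))
  have hT4 : 0 ≤ (μcp * μcm) * ((-α) * (πp*πm*μcm*(1-πm))) :=
    mul_nonneg (mul_pos hμcp hμcm).le (mul_nonneg hna.le
      (mul_nonneg (mul_nonneg (mul_pos hp0 hm0).le hμcm.le) (by linarith)))
  have hT5 : 0 ≤ (μcp * μcm) * (α^2 * μcp * μcm * (πp*πm*(1 - πp - πm + 2*π11) - π11^2)) := by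
    have : (0:ℝ) ≤ α^2 * μcp * μcm := by positivity
    exact mul_nonneg (by positivity) (mul_nonneg this hQ)
  have hT6 : 0 < (μcp * μcm) * (πp * πm) := mul_pos (mul_pos hμcp hμcm) (mul_pos hp0 hm0)
  have hGK : γ + α * (πp * μcp * βp + πm * μcm * βm) < 0 := by
    rw [hγ, hβp, hβm]
    linarith [hT1, hT2, hT3, hT4, hT5, hT6]
  -- conclude
  have hα2K : α^2 * (πp * μcp * βp + πm * μcm * βm) < 0 := by
    have : 0 < α^2 := pow_two_pos_of_ne_zero hα.ne
    exact mul_neg_of_pos_of_neg this hK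
  constructor
  · rw [key]
    have := div_pos_of_neg_of_neg hα2K hγneg
    linarith
  · rw [key]
    have hnum : 0 < α * (γ + α * (πp * μcp * βp + πm * μcm * βm)) :=
      mul_pos_of_neg_of_neg hα hGK
    have hdiv := div_neg_of_pos_of_neg hnum hγneg
    have heq : α + α^2 * (πp * μcp * βp + πm * μcm * βm) / γ
        = α * (γ + α * (πp * μcp * βp + πm * μcm * βm)) / γ := by
      field_simp
    rw [heq]; exact hdiv
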